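/- arXiv:1110.4770 — 2 statements merged into one kernel-verified Lean document; each statement's English description precedes it below -/
import Mathlib

section
/- Let φ solve φ'' + ((N-1)/t) φ' + (μ - (N-1)/t²) φ = 0 on (0,1) with φ(0)=0, φ'(1)=0, normalized so that ∫₀¹ φ(t)² t^{N-1} dt = 1/|B|, where μ = μ₂(B) is the corresponding Neumann eigenvalue of the unit ball B ⊂ R^N. Then |B| φ(1)² = 2μ/(μ - N + 1). -/
set_option maxHeartbeats 1000000

open MeasureTheory Metric

open Set Filter Topology

/-- The first nontrivial Neumann eigenvalue of the unit ball `B ⊂ ℝ^N`, defined via its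
variational characterization as the infimum of Rayleigh quotients of mean-zero `H¹` functions. -/
noncomputable def mu2 (N : ℕ) : ℝ :=
  sInf {R : ℝ | ∃ u : EuclideanSpace ℝ (Fin N) → ℝ,
    DifferentiableOn ℝ u (ball 0 1) ∧
    MemLp u 2 (volume.restrict (ball (0 : EuclideanSpace ℝ (Fin N)) 1)) ∧
    MemLp (fun x => fderiv ℝ u x) 2 (volume.restrict (ball (0 : EuclideanSpace ℝ (Fin N)) 1)) ∧
    (∫ x in ball (0 : EuclideanSpace ℝ (Fin N)) 1, u x) = 0 ∧
    (∫ x in ball (0 : EuclideanSpace ℝ (Fin N)) 1, (u x) ^ 2) ≠ 0 ∧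
    R = (∫ x in ball (0 : EuclideanSpace ℝ (Fin N)) 1, ‖fderiv ℝ u x‖ ^ 2) /
        (∫ x in ball (0 : EuclideanSpace ℝ (Fin N)) 1, (u x) ^ 2)}


lemma hp1 (m : ℕ) (t : ℝ) : HasDerivAt (fun t : ℝ => t^m * t) (((m:ℝ)+1) * t^m) t := by
  have h := hasDerivAt_pow (m+1) t
  simpa [pow_succ] using h

lemma hp2 (m : ℕ) (t : ℝ) : HasDerivAt (fun t : ℝ => t^m * t * t) (((m:ℝ)+2) * (t^m * t)) t := by
  have h := hasDerivAt_pow (m+2) t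
  have e : (fun t : ℝ => t ^ (m+2)) = fun t : ℝ => t^m * t * t := by
    funext t; ring
  rw [e] at h
  refine h.congr_deriv ?_
  rw [show m + 2 - 1 = m + 1 from rfl, pow_succ]
  push_cast
  ring

lemma hp0 (m : ℕ) (t : ℝ) (ht : t ≠ 0) : HasDerivAt (fun t : ℝ => t^m) ((m:ℝ) * t^m / t) t := by
  have h := hasDerivAt_pow m t
  refine h.congr_deriv ?_
  cases m with
  | zero => simp
  | succ k =>
    rw [show k + 1 - 1 = k from rfl, pow_succ]
    push_cast
    field_simp

lemma no_blowup (m : ℕ) (φ φ' : ℝ → ℝ)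
    (hd1 : ∀ t ∈ Set.Ioc (0:ℝ) 1, HasDerivAt φ (φ' t) t)
    (hφ'c : ContinuousOn φ' (Set.Ioc 0 1))
    (M : ℝ) (hM : ∀ t ∈ Set.Icc (0:ℝ) 1, |φ t| ≤ M)
    (c : ℝ) (hc : 0 < c) (δ : ℝ) (hδ0 : 0 < δ) (hδ1 : δ ≤ 1)
    (hlow : ∀ s ∈ Set.Ioc (0:ℝ) δ, c/2 ≤ s^m * s * s * φ' s) : False := by
  have hMnn : 0 ≤ M := le_trans (abs_nonneg _) (hM 0 ⟨le_refl 0, by norm_num⟩)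
  have hlow' : ∀ s ∈ Set.Ioc (0:ℝ) δ, c/2 * (s^2)⁻¹ ≤ φ' s := by
    intro s hs
    have hs0 : (0:ℝ) < s := hs.1
    have hs1 : s ≤ 1 := hs.2.trans hδ1
    have hpow : s^m * s * s ≤ s^2 := by
      have h1 : s^m ≤ 1 := pow_le_one₀ hs0.le hs1
      nlinarith [sq_nonneg s]
    have hpos : 0 < s^m * s * s := by positivity
    have hls := hlow s hs
    have hφ'pos : 0 < φ' s := by nlinarith
    have h2 : c/2 ≤ s^2 * φ' s := by nlinarith
    rw [mul_inv_le_iff₀ (by positivity : (0:ℝ) < s^2)]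
    linarith
  set r : ℝ := δ⁻¹ + 4*M/c + 1 with hr
  have hrpos : 0 < r := by positivity
  set t : ℝ := min δ r⁻¹ with htdef
  have ht0 : 0 < t := lt_min hδ0 (by positivity)
  have htδ : t ≤ δ := min_le_left _ _
  have htr : t ≤ r⁻¹ := min_le_right _ _
  have htinv : r ≤ t⁻¹ := by
    rw [le_inv_comm₀ hrpos ht0]
    exact htr
  have hsub : Set.uIcc t δ ⊆ Set.Ioc (0:ℝ) 1 := by
    rw [Set.uIcc_of_le htδ]
    exact fun x hx => ⟨lt_of_lt_of_le ht0 hx.1, hx.2.trans hδ1⟩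
  have hint : IntervalIntegrable φ' volume t δ := (hφ'c.mono hsub).intervalIntegrable
  have hftc : ∫ s in t..δ, φ' s = φ δ - φ t :=
    intervalIntegral.integral_eq_sub_of_hasDerivAt (fun x hx => hd1 x (hsub hx)) hint
  have hint2 : IntervalIntegrable (fun s => c/2 * (s^2)⁻¹) volume t δ := by
    apply ContinuousOn.intervalIntegrable
    apply ContinuousOn.mul continuousOn_const
    apply ContinuousOn.inv₀ (by fun_prop)
    exact fun x hx => pow_ne_zero _ (ne_of_gt (hsub hx).1)
  have hmono : ∫ s in t..δ, c/2 * (s^2)⁻¹ ≤ ∫ s in t..δ, φ' s := by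
    apply intervalIntegral.integral_mono_on htδ hint2 hint
    intro s hs
    exact hlow' s ⟨lt_of_lt_of_le ht0 hs.1, hs.2⟩
  have hval : ∫ s in t..δ, c/2 * (s^2)⁻¹ = c/2 * (t⁻¹ - δ⁻¹) := by
    rw [intervalIntegral.integral_const_mul]
    have heq : ∫ s in t..δ, (s^2)⁻¹ = (fun s : ℝ => -s⁻¹) δ - (fun s : ℝ => -s⁻¹) t := by
      apply intervalIntegral.integral_eq_sub_of_hasDerivAt
      · intro x hx
        have hx0 : x ≠ 0 := (ne_of_gt (hsub hx).1)
        exact ((hasDerivAt_inv hx0).neg).congr_deriv (by simp)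
      · apply ContinuousOn.intervalIntegrable
        apply ContinuousOn.inv₀ (by fun_prop)
        exact fun x hx => pow_ne_zero _ (ne_of_gt (hsub hx).1)
    rw [heq]; ring
  have h1 : c/2 * (t⁻¹ - δ⁻¹) ≤ 2*M := by
    rw [hval, hftc] at hmono
    have hb1 := abs_le.mp (hM t ⟨ht0.le, le_trans htδ hδ1⟩)
    have hb2 := abs_le.mp (hM δ ⟨hδ0.le, hδ1⟩)
    linarith
  have h2 : 2*M < c/2 * (t⁻¹ - δ⁻¹) := by
    have hc' : c/2 * (4*M/c) = 2*M := by field_simp; ring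
    nlinarith
  linarith

lemma key (m : ℕ) (μ : ℝ) (φ φ' φ'' : ℝ → ℝ)
    (hd1 : ∀ t ∈ Set.Ioc (0:ℝ) 1, HasDerivAt φ (φ' t) t)
    (hd2 : ∀ t ∈ Set.Ioc (0:ℝ) 1, HasDerivAt φ' (φ'' t) t)
    (hcont : ContinuousOn φ (Set.Icc 0 1))
    (hode : ∀ t ∈ Set.Ioo (0:ℝ) 1,
      φ'' t + ((m:ℝ)+1) / t * φ' t + (μ - ((m:ℝ)+1) / t ^ 2) * φ t = 0)
    (h0 : φ 0 = 0) (h1 : φ' 1 = 0) :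
    (μ - ((m:ℝ)+1)) * φ 1 ^ 2 = 2 * μ * ∫ t in (0:ℝ)..1, φ t ^ 2 * (t^m * t) := by
  have hφ'c : ContinuousOn φ' (Set.Ioc 0 1) :=
    fun t ht => ((hd2 t ht).continuousAt).continuousWithinAt
  have hφcI : ContinuousOn φ (Set.Ioc 0 1) := hcont.mono Set.Ioc_subset_Icc_self
  obtain ⟨M, hM⟩ := isCompact_Icc.exists_bound_of_continuousOn hcont
  have hM : ∀ t ∈ Set.Icc (0:ℝ) 1, |φ t| ≤ M := hM
  have hMnn : 0 ≤ M := le_trans (abs_nonneg _) (hM 0 ⟨le_refl 0, by norm_num⟩)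
  set W : ℝ → ℝ := fun t => t^m*t*t*φ' t - t^m*t*φ t with hWdef
  have hWcont : ContinuousOn W (Set.Ioc 0 1) := by
    apply ContinuousOn.sub
    · exact (ContinuousOn.mul (by fun_prop) hφ'c)
    · exact (ContinuousOn.mul (by fun_prop) hφcI)
  have hWd : ∀ t ∈ Set.Ioo (0:ℝ) 1, HasDerivAt W (-(μ * (t^m*t*t*φ t))) t := by
    intro t ht
    have htI : t ∈ Set.Ioc (0:ℝ) 1 := ⟨ht.1, ht.2.le⟩
    have ht0 : t ≠ 0 := ne_of_gt ht.1
    have h := ((hp2 m t).mul (hd2 t htI)).sub ((hp1 m t).mul (hd1 t htI))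
    refine h.congr_deriv ?_
    have hφ'' : φ'' t = -(((m:ℝ)+1)/t*φ' t) - (μ - ((m:ℝ)+1)/t^2)*φ t := by
      linarith [hode t ht]
    rw [hφ'']
    field_simp
    ring
  set g0 : ℝ → ℝ := fun s => s^m*s*s*φ s with hg0def
  have hg0c : ContinuousOn g0 (Set.Icc 0 1) := ContinuousOn.mul (by fun_prop) hcont
  have hg0int : ∀ a b, a ∈ Set.Icc (0:ℝ) 1 → b ∈ Set.Icc (0:ℝ) 1 →
      IntervalIntegrable g0 volume a b := by
    intro a b ha hb
    exact (hg0c.mono (Set.uIcc_subset_Icc ha hb)).intervalIntegrable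
  have hWft : ∀ t ∈ Set.Ioc (0:ℝ) 1, W t = W 1 + μ * ∫ s in t..1, g0 s := by
    intro t ht
    rcases eq_or_lt_of_le ht.2 with h | h
    · rw [h]; simp
    · have hIcc : Set.Icc t 1 ⊆ Set.Ioc (0:ℝ) 1 := fun x hx => ⟨lt_of_lt_of_le ht.1 hx.1, hx.2⟩
      have hftc := intervalIntegral.integral_eq_sub_of_hasDerivAt_of_le h.le
        (hWcont.mono hIcc)
        (fun x hx => hWd x ⟨lt_trans ht.1 hx.1, hx.2⟩)
        (by
          apply ContinuousOn.intervalIntegrable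
          apply ContinuousOn.neg
          apply ContinuousOn.mul continuousOn_const
          exact hg0c.mono ((Set.uIcc_subset_Icc ⟨ht.1.le, ht.2⟩ (by norm_num))))
      have e : ∫ y in t..1, -(μ * (y^m*y*y*φ y)) = -(μ * ∫ s in t..1, g0 s) := by
        rw [← intervalIntegral.integral_const_mul, ← intervalIntegral.integral_neg]
      rw [e] at hftc
      linarith
  set c : ℝ := W 1 + μ * ∫ s in (0:ℝ)..1, g0 s with hcdef
  have hWc2 : ∀ t ∈ Set.Ioc (0:ℝ) 1, W t - c = -(μ * ∫ s in (0:ℝ)..t, g0 s) := by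
    intro t ht
    have hadj : (∫ s in (0:ℝ)..t, g0 s) + ∫ s in t..1, g0 s = ∫ s in (0:ℝ)..1, g0 s :=
      intervalIntegral.integral_add_adjacent_intervals
        (hg0int 0 t (by norm_num) ⟨ht.1.le, ht.2⟩)
        (hg0int t 1 ⟨ht.1.le, ht.2⟩ (by norm_num))
    have h1' := hWft t ht
    rw [hcdef, h1']
    linear_combination μ * hadj
  have hWb : ∀ t ∈ Set.Ioc (0:ℝ) 1, |W t - c| ≤ |μ| * M * t := by
    intro t ht
    rw [hWc2 t ht, abs_neg, abs_mul]
    have hb : ‖∫ s in (0:ℝ)..t, g0 s‖ ≤ M * |t - 0| := by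
      apply intervalIntegral.norm_integral_le_of_norm_le_const
      intro x hx
      rw [Set.uIoc_of_le ht.1.le] at hx
      have hx0 : 0 < x := hx.1
      have hx1 : x ≤ 1 := hx.2.trans ht.2
      have hxm : x^m ≤ 1 := pow_le_one₀ hx0.le hx1
      have hφx := hM x ⟨hx0.le, hx1⟩
      have : |g0 x| = x^m*x*x*|φ x| := by
        rw [hg0def]; simp only []
        rw [abs_mul, abs_of_pos (by positivity : (0:ℝ) < x^m*x*x)]
      rw [Real.norm_eq_abs, this]
      have hxx1 : x^m*x ≤ x := by
        simpa using mul_le_mul_of_nonneg_right hxm hx0.le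
      have hxxx : x^m*x*x ≤ 1 := by nlinarith [mul_le_mul_of_nonneg_right hxx1 hx0.le]
      calc x^m*x*x*|φ x| ≤ 1*M := mul_le_mul hxxx hφx (abs_nonneg _) one_pos.le
        _ = M := one_mul M
    rw [sub_zero, abs_of_pos ht.1, Real.norm_eq_abs] at hb
    calc |μ| * |∫ s in (0:ℝ)..t, g0 s| ≤ |μ| * (M * t) :=
          mul_le_mul_of_nonneg_left hb (abs_nonneg μ)
      _ = |μ| * M * t := by ring
  have hc0 : c = 0 := by
    by_contra hc
    have hcabs : 0 < |c| := abs_pos.mpr hc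
    set K : ℝ := |μ| * M + M + 1 with hKdef
    have hK : 0 < K := by positivity
    set δ : ℝ := min 1 (|c|/(2*K)) with hδdef
    have hδ0 : 0 < δ := lt_min one_pos (by positivity)
    have hδ1 : δ ≤ 1 := min_le_left _ _
    have hnear : ∀ s ∈ Set.Ioc (0:ℝ) δ, |s^m*s*s*φ' s - c| ≤ |c|/2 := by
      intro s hs
      have hsI : s ∈ Set.Ioc (0:ℝ) 1 := ⟨hs.1, hs.2.trans hδ1⟩
      have hs0 : 0 < s := hs.1
      have hs1 : s ≤ 1 := hsI.2
      have hsm : s^m ≤ 1 := pow_le_one₀ hs0.le hs1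
      have e : s^m*s*s*φ' s - c = (W s - c) + s^m*s*φ s := by
        simp only [hWdef]; ring
      have hb1 := hWb s hsI
      have hb2 : |s^m*s*φ s| ≤ M * s := by
        rw [abs_mul, abs_of_pos (by positivity : (0:ℝ) < s^m*s)]
        have hφs := hM s ⟨hs0.le, hs1⟩
        have hss : s^m*s ≤ s := by nlinarith
        calc s^m*s*|φ s| ≤ s*M := mul_le_mul hss hφs (abs_nonneg _) hs0.le
          _ = M*s := mul_comm s M
      have h3 : s ≤ |c|/(2*K) := hs.2.trans (min_le_right _ _)
      have h4 : (|μ| * M + M) * s ≤ K * (|c|/(2*K)) := by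
        apply mul_le_mul (by rw [hKdef]; linarith) h3 hs0.le hK.le
      have h5 : K * (|c|/(2*K)) = |c|/2 := by field_simp
      calc |s^m*s*s*φ' s - c| = |(W s - c) + s^m*s*φ s| := by rw [e]
        _ ≤ |W s - c| + |s^m*s*φ s| := abs_add_le _ _
        _ ≤ |μ| * M * s + M * s := add_le_add hb1 hb2
        _ = (|μ| * M + M) * s := by ring
        _ ≤ |c|/2 := by rw [← h5]; exact h4
    rcases lt_or_gt_of_ne hc with hneg | hpos
    · -- c < 0 : apply no_blowup to -φ
      apply no_blowup m (fun t => -φ t) (fun t => -φ' t)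
        (fun t ht => (hd1 t ht).neg) (hφ'c.neg) M
        (fun t ht => by simpa using hM t ht) (-c) (by linarith) δ hδ0 hδ1
      intro s hs
      have h := (abs_le.mp (hnear s hs)).2
      rw [abs_of_neg hneg] at h
      have e : s^m*s*s*(-φ' s) = -(s^m*s*s*φ' s) := by ring
      show -c/2 ≤ s^m*s*s*(-φ' s)
      rw [e]
      linarith
    · apply no_blowup m φ φ' hd1 hφ'c M hM c hpos δ hδ0 hδ1
      intro s hs
      have h := (abs_le.mp (hnear s hs)).1
      rw [abs_of_pos hpos] at h
      linarith
  have hW0 : ∀ t ∈ Set.Ioc (0:ℝ) 1, |W t| ≤ |μ| * M * (t^m*t*t*t) := by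
    intro t ht
    have hWt : W t = -(μ * ∫ s in (0:ℝ)..t, g0 s) := by
      have := hWc2 t ht; rw [hc0] at this; linarith
    rw [hWt, abs_neg, abs_mul]
    have hb : ‖∫ s in (0:ℝ)..t, g0 s‖ ≤ (M * (t^m*t*t)) * |t - 0| := by
      apply intervalIntegral.norm_integral_le_of_norm_le_const
      intro x hx
      rw [Set.uIoc_of_le ht.1.le] at hx
      have hx0 : 0 < x := hx.1
      have hxt : x ≤ t := hx.2
      have hxm : x^m ≤ t^m := pow_le_pow_left₀ hx0.le hxt m
      have hφx := hM x ⟨hx0.le, hxt.trans ht.2⟩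
      have e : |g0 x| = x^m*x*x*|φ x| := by
        rw [hg0def]; simp only []
        rw [abs_mul, abs_of_pos (by positivity : (0:ℝ) < x^m*x*x)]
      rw [Real.norm_eq_abs, e]
      have ht0' : (0:ℝ) < t := ht.1
      have h1' : x^m*x*x*|φ x| ≤ t^m*t*t*|φ x| := by
        apply mul_le_mul_of_nonneg_right _ (abs_nonneg _)
        have e1 : x^m*x ≤ t^m*t := mul_le_mul hxm hxt hx0.le (pow_nonneg ht0'.le m)
        exact mul_le_mul e1 hxt hx0.le (mul_nonneg (pow_nonneg ht0'.le m) ht0'.le)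
      have h2' : t^m*t*t*|φ x| ≤ t^m*t*t*M := by
        apply mul_le_mul_of_nonneg_left hφx
          (mul_nonneg (mul_nonneg (pow_nonneg ht0'.le m) ht0'.le) ht0'.le)
      calc x^m*x*x*|φ x| ≤ t^m*t*t*M := h1'.trans h2'
        _ = M * (t^m*t*t) := by ring
    rw [sub_zero, abs_of_pos ht.1, Real.norm_eq_abs] at hb
    calc |μ| * |∫ s in (0:ℝ)..t, g0 s| ≤ |μ| * (M * (t^m*t*t) * t) :=
          mul_le_mul_of_nonneg_left hb (abs_nonneg μ)
      _ = |μ| * M * (t^m*t*t*t) := by ring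
  set C : ℝ := |φ 1| + |μ| * M with hCdef
  have hCnn : 0 ≤ C := by positivity
  have hφlin : ∀ t ∈ Set.Ioc (0:ℝ) 1, |φ t| ≤ C*t := by
    intro t ht
    have ht0 : (0:ℝ) < t := ht.1
    have hIcc : Set.uIcc t 1 ⊆ Set.Ioc (0:ℝ) 1 := by
      rw [Set.uIcc_of_le ht.2]
      exact fun x hx => ⟨lt_of_lt_of_le ht0 hx.1, hx.2⟩
    have hdh : ∀ s ∈ Set.uIcc t 1, HasDerivAt (fun s => φ s / s)
        ((φ' s * s - φ s * 1)/s^2) s := by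
      intro s hs
      exact (hd1 s (hIcc hs)).div (hasDerivAt_id s) (ne_of_gt (hIcc hs).1)
    have hcint : IntervalIntegrable (fun s => (φ' s * s - φ s * 1)/s^2) volume t 1 := by
      apply ContinuousOn.intervalIntegrable
      apply ContinuousOn.div
      · exact ((hφ'c.mono hIcc).mul (continuousOn_id)).sub
          ((hφcI.mono hIcc).mul continuousOn_const)
      · fun_prop
      · exact fun x hx => pow_ne_zero _ (ne_of_gt (hIcc hx).1)
    have hftc := intervalIntegral.integral_eq_sub_of_hasDerivAt hdh hcint
    have hbint : ‖∫ s in t..1, (φ' s * s - φ s * 1)/s^2‖ ≤ (|μ| * M) * |1 - t| := by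
      apply intervalIntegral.norm_integral_le_of_norm_le_const
      intro x hx
      rw [Set.uIoc_of_le ht.2] at hx
      have hxI : x ∈ Set.Ioc (0:ℝ) 1 := ⟨lt_trans ht0 hx.1, hx.2⟩
      have hx0 : (0:ℝ) < x := hxI.1
      have hpos : (0:ℝ) < x^m*x*x*x :=
        mul_pos (mul_pos (mul_pos (pow_pos hx0 m) hx0) hx0) hx0
      have e : (φ' x * x - φ x * 1)/x^2 = W x / (x^m*x*x*x) := by
        simp only [hWdef]
        field_simp
      rw [Real.norm_eq_abs, e, abs_div, abs_of_pos hpos, div_le_iff₀ hpos]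
      calc |W x| ≤ |μ| * M * (x^m*x*x*x) := hW0 x hxI
        _ = |μ| * M * (x^m*x*x*x) := rfl
    rw [hftc] at hbint
    have h1t : |1 - t| ≤ 1 := by rw [abs_of_nonneg (by linarith [ht.2])]; linarith
    have hq : |φ t / t| ≤ C := by
      have h2 : |φ t / t| ≤ |φ 1 / 1 - φ t / t| + |φ 1| := by
        have e0 : φ t / t = φ 1 - (φ 1 / 1 - φ t / t) := by ring
        calc |φ t / t| = |φ 1 - (φ 1/1 - φ t/t)| := by rw [← e0]
          _ ≤ |φ 1| + |φ 1/1 - φ t/t| := abs_sub _ _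
          _ = |φ 1 / 1 - φ t / t| + |φ 1| := by ring
      have hb2 : |φ 1 / 1 - φ t / t| ≤ |μ| * M := by
        calc |φ 1 / 1 - φ t / t| ≤ (|μ| * M) * |1 - t| := hbint
          _ ≤ (|μ| * M) * 1 := mul_le_mul_of_nonneg_left h1t (by positivity)
          _ = |μ| * M := mul_one _
      rw [hCdef]
      linarith
    rw [abs_div, abs_of_pos ht0, div_le_iff₀ ht0] at hq
    linarith [hq]
  set Bd : ℝ := C + |μ| * M with hBddef
  have hBdnn : 0 ≤ Bd := by positivity
  have hφ'b : ∀ t ∈ Set.Ioc (0:ℝ) 1, |φ' t| ≤ Bd := by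
    intro t ht
    have ht0 : (0:ℝ) < t := ht.1
    have ht1 : t ≤ 1 := ht.2
    have htm : t^m ≤ 1 := pow_le_one₀ ht0.le ht1
    have hpos : (0:ℝ) < t^m*t*t := by positivity
    have e : φ' t = W t/(t^m*t*t) + φ t / t := by
      simp only [hWdef]
      field_simp
      ring
    have hb1 : |W t/(t^m*t*t)| ≤ |μ| * M := by
      rw [abs_div, abs_of_pos hpos, div_le_iff₀ hpos]
      calc |W t| ≤ |μ| * M * (t^m*t*t*t) := hW0 t ht
        _ ≤ |μ| * M * (t^m*t*t) := by
            nlinarith [mul_le_mul_of_nonneg_left (mul_le_mul_of_nonneg_left ht1 hpos.le)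
              (mul_nonneg (abs_nonneg μ) hMnn)]
    have hb2 : |φ t / t| ≤ C := by
      rw [abs_div, abs_of_pos ht0, div_le_iff₀ ht0]
      calc |φ t| ≤ C * t := hφlin t ht
        _ = C * t := rfl
    calc |φ' t| = |W t/(t^m*t*t) + φ t / t| := by rw [← e]
      _ ≤ |W t/(t^m*t*t)| + |φ t / t| := abs_add_le _ _
      _ ≤ |μ| * M + C := add_le_add hb1 hb2
      _ = Bd := by rw [hBddef]; ring
  set F : ℝ → ℝ := fun t => t^m*t*t*(φ' t)^2 + μ*((t^m*t*t)*(φ t)^2)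
      - ((m:ℝ)+1)*(t^m*(φ t)^2) + (m:ℝ)*((t^m*t)*(φ t*φ' t)) with hFdef
  have hFc : ContinuousOn F (Set.Ioc 0 1) := by
    apply ContinuousOn.add
    apply ContinuousOn.sub
    apply ContinuousOn.add
    · exact ContinuousOn.mul (by fun_prop) (hφ'c.pow 2)
    · exact ContinuousOn.mul continuousOn_const (ContinuousOn.mul (by fun_prop) (hφcI.pow 2))
    · exact ContinuousOn.mul continuousOn_const (ContinuousOn.mul (by fun_prop) (hφcI.pow 2))
    · exact ContinuousOn.mul continuousOn_const (ContinuousOn.mul (by fun_prop) (hφcI.mul hφ'c))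
  set g : ℝ → ℝ := fun t => 2*μ*((φ t)^2*(t^m*t)) with hgdef
  have hgc : ContinuousOn g (Set.Icc 0 1) :=
    ContinuousOn.mul continuousOn_const ((hcont.pow 2).mul (by fun_prop))
  have hgint : ∀ a b, a ∈ Set.Icc (0:ℝ) 1 → b ∈ Set.Icc (0:ℝ) 1 →
      IntervalIntegrable g volume a b := by
    intro a b ha hb
    exact (hgc.mono (Set.uIcc_subset_Icc ha hb)).intervalIntegrable
  have hFd : ∀ t ∈ Set.Ioo (0:ℝ) 1, HasDerivAt F (g t) t := by
    intro t ht
    have htI : t ∈ Set.Ioc (0:ℝ) 1 := ⟨ht.1, ht.2.le⟩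
    have ht0 : t ≠ 0 := ne_of_gt ht.1
    have hA := (hp2 m t).mul ((hd2 t htI).pow 2)
    have hB := (((hp2 m t).mul ((hd1 t htI).pow 2))).const_mul μ
    have hC' := ((hp0 m t ht0).mul ((hd1 t htI).pow 2)).const_mul ((m:ℝ)+1)
    have hD := ((hp1 m t).mul ((hd1 t htI).mul (hd2 t htI))).const_mul (m:ℝ)
    have h := ((hA.add hB).sub hC').add hD
    refine h.congr_deriv ?_
    have hφ'' : φ'' t = -(((m:ℝ)+1)/t*φ' t) - (μ - ((m:ℝ)+1)/t^2)*φ t := by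
      linarith [hode t ht]
    simp only [hgdef, Pi.mul_apply, Pi.pow_apply]
    rw [hφ'']
    field_simp
    ring
  have hFt : ∀ ε ∈ Set.Ioo (0:ℝ) 1, F 1 - F ε = ∫ t in ε..1, g t := by
    intro ε hε
    have hIcc : Set.Icc ε 1 ⊆ Set.Ioc (0:ℝ) 1 := fun x hx => ⟨lt_of_lt_of_le hε.1 hx.1, hx.2⟩
    have := intervalIntegral.integral_eq_sub_of_hasDerivAt_of_le hε.2.le
      (hFc.mono hIcc)
      (fun x hx => hFd x ⟨lt_trans hε.1 hx.1, hx.2⟩)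
      (hgint ε 1 ⟨hε.1.le, hε.2.le⟩ (by norm_num))
    linarith
  set I : ℝ := ∫ t in (0:ℝ)..1, g t with hIdef
  have hsplit : ∀ ε ∈ Set.Ioc (0:ℝ) 1, ∫ t in ε..1, g t = I - ∫ t in (0:ℝ)..ε, g t := by
    intro ε hε
    have hadj : (∫ s in (0:ℝ)..ε, g s) + ∫ s in ε..1, g s = ∫ s in (0:ℝ)..1, g s :=
      intervalIntegral.integral_add_adjacent_intervals
        (hgint 0 ε (by norm_num) ⟨hε.1.le, hε.2⟩)
        (hgint ε 1 ⟨hε.1.le, hε.2⟩ (by norm_num))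
    rw [hIdef, ← hadj]
    ring
  have hne : (𝓝[Set.Ioc (0:ℝ) 1] (0:ℝ)).NeBot := by
    apply mem_closure_iff_nhdsWithin_neBot.mp
    rw [closure_Ioc (by norm_num : (0:ℝ) ≠ 1)]
    exact ⟨le_refl 0, by norm_num⟩
  set D : ℝ := Bd^2 + |μ| * M^2 + ((m:ℝ)+1)*C^2 + (m:ℝ)*(C*Bd) with hDdef
  have hFbound : ∀ t ∈ Set.Ioc (0:ℝ) 1, ‖F t‖ ≤ D * t := by
    intro t ht
    have ht0 : (0:ℝ) < t := ht.1
    have ht1 : t ≤ 1 := ht.2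
    have htm : t^m ≤ 1 := pow_le_one₀ ht0.le ht1
    have htmt : t^m * t ≤ 1 := by nlinarith
    have hb0 := hφ'b t ht
    have hbl := hφlin t ht
    have hbM := hM t ⟨ht0.le, ht1⟩
    have hannn : (0:ℝ) ≤ t^m*t*t :=
      mul_nonneg (mul_nonneg (pow_nonneg ht0.le m) ht0.le) ht0.le
    have hat : t^m*t*t ≤ t := by
      have := mul_le_mul_of_nonneg_right htmt ht0.le
      simpa using this
    have h1' : |t^m*t*t*(φ' t)^2| ≤ Bd^2 * t := by
      rw [abs_mul, abs_of_pos (by positivity : (0:ℝ) < t^m*t*t), abs_pow]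
      have e1 : |φ' t|^2 ≤ Bd^2 := by nlinarith [abs_nonneg (φ' t)]
      calc t^m*t*t*|φ' t|^2 ≤ t^m*t*t*Bd^2 := mul_le_mul_of_nonneg_left e1 hannn
        _ ≤ t*Bd^2 := mul_le_mul_of_nonneg_right hat (sq_nonneg Bd)
        _ = Bd^2 * t := mul_comm _ _
    have h2' : |μ*((t^m*t*t)*(φ t)^2)| ≤ |μ| * M^2 * t := by
      rw [abs_mul, abs_mul, abs_of_pos (by positivity : (0:ℝ) < t^m*t*t), abs_pow]
      have e1 : |φ t|^2 ≤ M^2 := by nlinarith [abs_nonneg (φ t)]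
      have e2 : t^m*t*t*|φ t|^2 ≤ t * M^2 := by
        calc t^m*t*t*|φ t|^2 ≤ t^m*t*t*M^2 := mul_le_mul_of_nonneg_left e1 hannn
          _ ≤ t*M^2 := mul_le_mul_of_nonneg_right hat (sq_nonneg M)
      calc |μ| * (t^m*t*t*|φ t|^2) ≤ |μ| * (t * M^2) :=
            mul_le_mul_of_nonneg_left e2 (abs_nonneg μ)
        _ = |μ| * M^2 * t := by ring
    have h3' : |((m:ℝ)+1)*(t^m*(φ t)^2)| ≤ ((m:ℝ)+1)*C^2*t := by
      rw [abs_mul, abs_mul, abs_of_nonneg (by positivity : (0:ℝ) ≤ t^m),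
        abs_of_nonneg (by positivity : (0:ℝ) ≤ ((m:ℝ)+1)), abs_pow]
      have e1 : |φ t|^2 ≤ (C*t)^2 := by nlinarith [abs_nonneg (φ t)]
      have e2 : t^m*|φ t|^2 ≤ C^2*t := by
        have htt : t^2 ≤ t := by nlinarith
        calc t^m*|φ t|^2 ≤ 1*(C*t)^2 :=
              mul_le_mul htm e1 (sq_nonneg _) zero_le_one
          _ = C^2*t^2 := by ring
          _ ≤ C^2*t := mul_le_mul_of_nonneg_left htt (sq_nonneg C)
      calc ((m:ℝ)+1)*(t^m*|φ t|^2) ≤ ((m:ℝ)+1)*(C^2*t) :=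
            mul_le_mul_of_nonneg_left e2 (by positivity)
        _ = ((m:ℝ)+1)*C^2*t := by ring
    have h4' : |(m:ℝ)*((t^m*t)*(φ t*φ' t))| ≤ (m:ℝ)*(C*Bd)*t := by
      have e0 : |(m:ℝ)*((t^m*t)*(φ t*φ' t))| = (m:ℝ)*((t^m*t)*(|φ t| * |φ' t|)) := by
        rw [abs_mul, abs_mul, abs_mul, abs_mul, Nat.abs_cast,
          abs_of_nonneg (pow_nonneg ht0.le m), abs_of_nonneg ht0.le]
      rw [e0]
      have e1 : |φ t| * |φ' t| ≤ (C*t)*Bd :=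
        mul_le_mul hbl hb0 (abs_nonneg _) (mul_nonneg hCnn ht0.le)
      have e2 : (t^m*t)*(|φ t| * |φ' t|) ≤ (C*Bd)*t := by
        calc (t^m*t)*(|φ t| * |φ' t|) ≤ 1*((C*t)*Bd) :=
              mul_le_mul htmt e1 (mul_nonneg (abs_nonneg _) (abs_nonneg _)) zero_le_one
          _ = (C*Bd)*t := by ring
      calc (m:ℝ)*((t^m*t)*(|φ t| * |φ' t|)) ≤ (m:ℝ)*((C*Bd)*t) :=
            mul_le_mul_of_nonneg_left e2 (by positivity)
        _ = (m:ℝ)*(C*Bd)*t := by ring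
    rw [Real.norm_eq_abs]
    have hs1 : |F t| ≤ |t^m*t*t*(φ' t)^2 + μ*((t^m*t*t)*(φ t)^2) - ((m:ℝ)+1)*(t^m*(φ t)^2)|
        + |(m:ℝ)*((t^m*t)*(φ t*φ' t))| := by
      rw [hFdef]
      exact abs_add_le _ _
    have hs2 : |t^m*t*t*(φ' t)^2 + μ*((t^m*t*t)*(φ t)^2) - ((m:ℝ)+1)*(t^m*(φ t)^2)|
        ≤ |t^m*t*t*(φ' t)^2 + μ*((t^m*t*t)*(φ t)^2)| + |((m:ℝ)+1)*(t^m*(φ t)^2)| :=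
      abs_sub _ _
    have hs3 : |t^m*t*t*(φ' t)^2 + μ*((t^m*t*t)*(φ t)^2)|
        ≤ |t^m*t*t*(φ' t)^2| + |μ*((t^m*t*t)*(φ t)^2)| := abs_add_le _ _
    have : |F t| ≤ Bd^2*t + |μ| * M^2*t + ((m:ℝ)+1)*C^2*t + (m:ℝ)*(C*Bd)*t := by linarith
    calc |F t| ≤ Bd^2*t + |μ| * M^2*t + ((m:ℝ)+1)*C^2*t + (m:ℝ)*(C*Bd)*t := this
      _ = D * t := by rw [hDdef]; ring
  have hFlim0 : Tendsto F (𝓝[Set.Ioc (0:ℝ) 1] 0) (𝓝 0) := by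
    have hev : ∀ᶠ t in 𝓝[Set.Ioc (0:ℝ) 1] (0:ℝ), ‖F t‖ ≤ D * t := by
      filter_upwards [self_mem_nhdsWithin] with t ht using hFbound t ht
    have hcont' : Tendsto (fun t : ℝ => D * t) (𝓝 0) (𝓝 (D * 0)) :=
      (continuous_const.mul continuous_id).tendsto 0
    rw [mul_zero] at hcont'
    exact squeeze_zero_norm' hev (hcont'.mono_left nhdsWithin_le_nhds)
  have hOlim : Tendsto (fun ε => ∫ t in (0:ℝ)..ε, g t) (𝓝[Set.Ioc (0:ℝ) 1] 0) (𝓝 0) := by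
    have hev : ∀ᶠ ε in 𝓝[Set.Ioc (0:ℝ) 1] (0:ℝ),
        ‖∫ t in (0:ℝ)..ε, g t‖ ≤ (2*|μ| * M^2) * ε := by
      filter_upwards [self_mem_nhdsWithin] with ε hε
      have hb : ‖∫ t in (0:ℝ)..ε, g t‖ ≤ (2*|μ| * M^2) * |ε - 0| := by
        apply intervalIntegral.norm_integral_le_of_norm_le_const
        intro x hx
        rw [Set.uIoc_of_le hε.1.le] at hx
        have hx0 : (0:ℝ) < x := hx.1
        have hx1 : x ≤ 1 := hx.2.trans hε.2
        have hxm : x^m * x ≤ 1 := by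
          have hp : x^m ≤ 1 := pow_le_one₀ hx0.le hx1
          nlinarith
        have hbM := hM x ⟨hx0.le, hx1⟩
        rw [Real.norm_eq_abs]
        simp only [hgdef]
        rw [abs_mul, abs_mul, abs_mul, abs_pow, abs_mul,
          abs_of_nonneg (pow_nonneg hx0.le m), abs_of_nonneg hx0.le, abs_two]
        have e1 : |φ x|^2 ≤ M^2 := by nlinarith [abs_nonneg (φ x)]
        have e2 : |φ x|^2*(x^m*x) ≤ M^2*1 :=
          mul_le_mul e1 hxm (mul_nonneg (pow_nonneg hx0.le m) hx0.le) (sq_nonneg M)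
        calc 2 * |μ| * (|φ x|^2*(x^m*x)) ≤ 2 * |μ| * (M^2*1) :=
              mul_le_mul_of_nonneg_left e2 (by positivity)
          _ = 2*|μ| * M^2 := by ring
      rw [sub_zero, abs_of_nonneg hε.1.le] at hb
      exact hb
    have hcont' : Tendsto (fun ε : ℝ => (2*|μ| * M^2) * ε) (𝓝 0) (𝓝 ((2*|μ| * M^2) * 0)) :=
      (continuous_const.mul continuous_id).tendsto 0
    rw [mul_zero] at hcont'
    exact squeeze_zero_norm' hev (hcont'.mono_left nhdsWithin_le_nhds)
  have hFI : F 1 = I := by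
    have h2 : Tendsto F (𝓝[Set.Ioc (0:ℝ) 1] 0) (𝓝 (F 1 - I)) := by
      have h3 : Tendsto (fun ε => F 1 - I + ∫ t in (0:ℝ)..ε, g t)
          (𝓝[Set.Ioc (0:ℝ) 1] 0) (𝓝 (F 1 - I)) := by
        simpa using (tendsto_const_nhds.add hOlim)
      apply h3.congr'
      filter_upwards [self_mem_nhdsWithin,
        eventually_nhdsWithin_of_eventually_nhds (eventually_lt_nhds (by norm_num : (0:ℝ) < 1))]
        with ε hε hε1
      have e1 := hFt ε ⟨hε.1, hε1⟩
      have e2 := hsplit ε hε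
      linarith
    have := tendsto_nhds_unique h2 hFlim0
    linarith
  have hF1 : F 1 = (μ - ((m:ℝ)+1)) * φ 1 ^ 2 := by
    rw [hFdef]
    simp only [one_pow, one_mul, mul_one, h1]
    ring
  rw [← hF1, hFI, hIdef, hgdef]
  rw [← intervalIntegral.integral_const_mul]

/-- Let `φ` solve `φ'' + ((N-1)/t) φ' + (μ - (N-1)/t²) φ = 0` on `(0,1)` with `φ(0) = 0`,
`φ'(1) = 0`, normalized so that `∫₀¹ φ(t)² t^{N-1} dt = 1/|B|`, where `μ = μ₂(B)` is the first
nontrivial Neumann eigenvalue of the unit ball `B ⊂ ℝ^N`. Then `|B| φ(1)² = 2μ/(μ - N + 1)`. -/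
theorem normalized_eigenprofile_boundary_value (N : ℕ) (hN : 2 ≤ N)
    (φ φ' φ'' : ℝ → ℝ)
    (hd1 : ∀ t ∈ Set.Ioc (0 : ℝ) 1, HasDerivAt φ (φ' t) t)
    (hd2 : ∀ t ∈ Set.Ioc (0 : ℝ) 1, HasDerivAt φ' (φ'' t) t)
    (hcont : ContinuousOn φ (Set.Icc 0 1))
    (hode : ∀ t ∈ Set.Ioo (0 : ℝ) 1,
      φ'' t + ((N : ℝ) - 1) / t * φ' t + (mu2 N - ((N : ℝ) - 1) / t ^ 2) * φ t = 0)
    (h0 : φ 0 = 0) (h1 : φ' 1 = 0)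
    (hnorm : ∫ t in (0 : ℝ)..1, φ t ^ 2 * t ^ (N - 1) =
      1 / (volume (ball (0 : EuclideanSpace ℝ (Fin N)) 1)).toReal) :
    (volume (ball (0 : EuclideanSpace ℝ (Fin N)) 1)).toReal * φ 1 ^ 2 =
      2 * mu2 N / (mu2 N - (N : ℝ) + 1) := by
  obtain ⟨m, hm⟩ : ∃ m, N = 2 + m := le_iff_exists_add.mp hN
  subst hm
  set μ : ℝ := mu2 (2 + m) with hμdef
  have hcast : ((2 + m : ℕ) : ℝ) - 1 = (m:ℝ) + 1 := by push_cast; ring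
  simp only [hcast] at hode
  have hpow : 2 + m - 1 = m + 1 := by omega
  rw [hpow] at hnorm
  have hint_eq : (∫ t in (0:ℝ)..1, φ t ^ 2 * t ^ (m+1))
      = ∫ t in (0:ℝ)..1, φ t ^ 2 * (t^m * t) := by
    apply intervalIntegral.integral_congr
    intro t ht
    simp [pow_succ]
  have hkey := key m μ φ φ' φ'' hd1 hd2 hcont hode h0 h1
  rw [← hint_eq, hnorm] at hkey
  set V : ℝ := (volume (ball (0 : EuclideanSpace ℝ (Fin (2+m))) 1)).toReal with hVdef
  have hV0 : 0 < V := by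
    apply ENNReal.toReal_pos
    · exact (measure_ball_pos volume 0 one_pos).ne'
    · exact measure_ball_lt_top.ne
  have hgoalcast : μ - ((2+m : ℕ):ℝ) + 1 = μ - ((m:ℝ)+1) := by push_cast; ring
  rw [hgoalcast]
  set d : ℝ := μ - ((m:ℝ)+1) with hddef
  have hd0 : d ≠ 0 := by
    intro h
    have hμ0 : μ = 0 := by
      have h2 := hkey
      rw [h, zero_mul] at h2
      have h3 : 2*μ*(1/V) = 0 := h2.symm
      rcases mul_eq_zero.mp h3 with h4 | h4
      · rcases mul_eq_zero.mp h4 with h5 | h5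
        · norm_num at h5
        · exact h5
      · exfalso
        rw [one_div] at h4
        exact (inv_ne_zero (ne_of_gt hV0)) h4
    rw [hddef, hμ0] at h
    have hpos : (0:ℝ) < (m:ℝ)+1 := by positivity
    linarith
  field_simp at hkey ⊢
  linear_combination hkey
end

section
/- Let G : [0,∞) → R be nondecreasing with G(t) > 0 for t > 0, and let x̃ ∈ R^N \ {0}. Then ∫_B G(|x + x̃|) ((x + x̃)/|x + x̃|) · x̃ dx > 0, where B is the unit ball in R^N. -/
open MeasureTheory Metric Set

lemma key_arith (G : ℝ → ℝ) (hG : MonotoneOn G (Set.Ici 0)) (hGpos : ∀ t : ℝ, 0 < t → 0 < G t)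
    {a b n r s : ℝ} (ha : 0 < a) (hb : 0 < b) (hcs : a ^ 2 < n * b)
    (hr2 : r ^ 2 = n + b + 2 * a) (hs2 : s ^ 2 = n + b - 2 * a)
    (hr0 : 0 ≤ r) (hs0 : 0 ≤ s) :
    0 < G r * (r⁻¹ * (a + b)) + G s * (s⁻¹ * (b - a)) := by
  have hn : 0 < n := by nlinarith
  have hs : 0 < s := by
    have h2 : 0 < s ^ 2 := by nlinarith [sq_nonneg (n - b)]
    exact lt_of_le_of_ne hs0 (by rintro rfl; simp at h2)
  have hr : 0 < r := by
    have h2 : 0 < r ^ 2 := by nlinarith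
    exact lt_of_le_of_ne hr0 (by rintro rfl; simp at h2)
  have hsr : s ≤ r := by nlinarith
  have hGs : 0 < G s := hGpos s hs
  have hGsr : G s ≤ G r := hG (mem_Ici.2 hs0) (mem_Ici.2 hr0) hsr
  have hpoly : (a - b) ^ 2 * (n + b + 2 * a) < (a + b) ^ 2 * (n + b - 2 * a) := by
    nlinarith [mul_pos ha (show (0:ℝ) < n * b - a ^ 2 by linarith)]
  have hsq : ((a - b) * r) ^ 2 < ((a + b) * s) ^ 2 := by
    rw [mul_pow, mul_pow, hr2, hs2]; exact hpoly
  have hkey : (a - b) * r < (a + b) * s :=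
    lt_of_pow_lt_pow_left₀ 2 (by positivity) hsq
  have h1 : 0 < (a + b) * s + (b - a) * r := by nlinarith
  have e : r⁻¹ * (a + b) + s⁻¹ * (b - a) = ((a + b) * s + (b - a) * r) / (r * s) := by
    field_simp
  calc (0:ℝ) < G s * (((a + b) * s + (b - a) * r) / (r * s)) := by positivity
    _ = G s * (r⁻¹ * (a + b)) + G s * (s⁻¹ * (b - a)) := by rw [← mul_add, e]
    _ ≤ G r * (r⁻¹ * (a + b)) + G s * (s⁻¹ * (b - a)) := by gcongr

/-- Let `G : [0,∞) → ℝ` be nondecreasing with `G(t) > 0` for `t > 0`, and let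
`x̃ ∈ ℝ^N \ {0}`. Then `∫_B G(|x + x̃|) ((x + x̃)/|x + x̃|) · x̃ dx > 0`, where `B` is
the unit ball in `ℝ^N`. -/
theorem integral_shifted_radial_pos (N : ℕ) (hN : 2 ≤ N) (G : ℝ → ℝ)
    (hG : MonotoneOn G (Ici 0)) (hGpos : ∀ t : ℝ, 0 < t → 0 < G t)
    (c : EuclideanSpace ℝ (Fin N)) (hc : c ≠ 0) :
    0 < ∫ x in ball (0 : EuclideanSpace ℝ (Fin N)) 1,
        G ‖x + c‖ * (inner ℝ ((‖x + c‖)⁻¹ • (x + c)) c : ℝ) := by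
  set f : EuclideanSpace ℝ (Fin N) → ℝ :=
    fun x => G ‖x + c‖ * (inner ℝ ((‖x + c‖)⁻¹ • (x + c)) c : ℝ) with hf
  set σ : EuclideanSpace ℝ (Fin N) ≃ₗᵢ[ℝ] EuclideanSpace ℝ (Fin N) :=
    Submodule.reflection (ℝ ∙ c)ᗮ with hσdef
  have hσc : σ c = -c :=
    Submodule.reflection_mem_subspace_orthogonalComplement_eq_neg
      (by rw [Submodule.orthogonal_orthogonal]; exact Submodule.mem_span_singleton_self c)
  have hinner : ∀ x, (inner ℝ (σ x) c : ℝ) = -(inner ℝ x c : ℝ) := by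
    intro x
    have h1 : σ (-c) = c := by rw [map_neg, hσc, neg_neg]
    calc (inner ℝ (σ x) c : ℝ) = inner ℝ (σ x) (σ (-c)) := by rw [h1]
      _ = inner ℝ x (-c) := σ.inner_map_map x (-c)
      _ = -(inner ℝ x c : ℝ) := by rw [inner_neg_right]
  have hinv : Function.Involutive σ := Submodule.reflection_involutive _
  -- measurability of f
  have hGmax : Monotone (fun t : ℝ => G (max t 0)) := fun t u htu =>
    hG (mem_Ici.2 (le_max_right _ _)) (mem_Ici.2 (le_max_right _ _)) (max_le_max htu le_rfl)
  have hfeq : f = fun x => G (max ‖x + c‖ 0) * (‖x + c‖⁻¹ * (inner ℝ (x + c) c : ℝ)) := by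
    funext x
    rw [hf]
    simp only [max_eq_left (norm_nonneg _), real_inner_smul_left]
  have hnm : Measurable fun x : EuclideanSpace ℝ (Fin N) => ‖x + c‖ :=
    (continuous_id.add continuous_const).norm.measurable
  have hfm : Measurable f := by
    rw [hfeq]
    exact ((hGmax.measurable).comp hnm).mul
      (hnm.inv.mul ((continuous_id.add continuous_const).inner continuous_const).measurable)
  -- bound
  have hbound : ∀ x : EuclideanSpace ℝ (Fin N), ‖x‖ < 1 →
      ‖f x‖ ≤ (|G 0| + |G (1 + ‖c‖)|) * ‖c‖ := by
    intro x hx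
    have h0 : (0:ℝ) ≤ ‖x + c‖ := norm_nonneg _
    have h1 : ‖x + c‖ ≤ 1 + ‖c‖ := (norm_add_le x c).trans (by linarith)
    have hGle : |G ‖x + c‖| ≤ |G 0| + |G (1 + ‖c‖)| := by
      have l1 : G 0 ≤ G ‖x + c‖ := hG (mem_Ici.2 le_rfl) (mem_Ici.2 h0) h0
      have l2 : G ‖x + c‖ ≤ G (1 + ‖c‖) :=
        hG (mem_Ici.2 h0) (mem_Ici.2 (by positivity)) h1
      have n1 := neg_abs_le (G 0)
      have n2 := le_abs_self (G (1 + ‖c‖))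
      have n3 := abs_nonneg (G 0)
      have n4 := abs_nonneg (G (1 + ‖c‖))
      rw [abs_le]
      exact ⟨by linarith, by linarith⟩
    have hin : |(inner ℝ ((‖x + c‖)⁻¹ • (x + c)) c : ℝ)| ≤ ‖c‖ := by
      refine (abs_real_inner_le_norm _ _).trans ?_
      have hu : ‖(‖x + c‖)⁻¹ • (x + c)‖ ≤ 1 := by
        rw [norm_smul, norm_inv, norm_norm]
        rcases eq_or_ne ‖x + c‖ 0 with h | h
        · simp [h]
        · rw [inv_mul_cancel₀ h]
      calc ‖(‖x + c‖)⁻¹ • (x + c)‖ * ‖c‖ ≤ 1 * ‖c‖ :=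
            mul_le_mul_of_nonneg_right hu (norm_nonneg c)
        _ = ‖c‖ := one_mul _
    rw [hf, Real.norm_eq_abs, abs_mul]
    exact mul_le_mul hGle hin (abs_nonneg _) (by positivity)
  -- integrability on the ball
  have hballne : volume (ball (0 : EuclideanSpace ℝ (Fin N)) 1) ≠ ⊤ := measure_ball_lt_top.ne
  have hfint : IntegrableOn f (ball 0 1) volume :=
    Measure.integrableOn_of_bounded hballne hfm.aestronglyMeasurable
      ((ae_restrict_iff' measurableSet_ball).2
        (ae_of_all _ fun x hx => hbound x (mem_ball_zero_iff.1 hx)))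
  -- the half sets
  set A : Set (EuclideanSpace ℝ (Fin N)) := ball 0 1 ∩ {x | 0 < (inner ℝ x c : ℝ)} with hA
  set B : Set (EuclideanSpace ℝ (Fin N)) := ball 0 1 ∩ {x | (inner ℝ x c : ℝ) < 0} with hB
  have hcont : Continuous fun x : EuclideanSpace ℝ (Fin N) => (inner ℝ x c : ℝ) :=
    continuous_id.inner continuous_const
  have hAopen : IsOpen A := isOpen_ball.inter (isOpen_lt continuous_const hcont)
  have hfA : IntegrableOn f A volume := hfint.mono_set inter_subset_left
  have hfB : IntegrableOn f B volume := hfint.mono_set inter_subset_left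
  have hfσm : Measurable (fun x => f (σ x)) := hfm.comp σ.continuous.measurable
  have hfσint : IntegrableOn (fun x => f (σ x)) A volume := by
    refine Measure.integrableOn_of_bounded (M := (|G 0| + |G (1 + ‖c‖)|) * ‖c‖)
      (ne_of_lt (lt_of_le_of_lt (measure_mono inter_subset_left) measure_ball_lt_top))
      hfσm.aestronglyMeasurable
      ((ae_restrict_iff' hAopen.measurableSet).2 (ae_of_all _ fun x hx => ?_))
    exact hbound (σ x) (by rw [σ.norm_map]; exact mem_ball_zero_iff.1 hx.1)
  -- null sets
  have hhyp : volume {x : EuclideanSpace ℝ (Fin N) | (inner ℝ x c : ℝ) = 0} = 0 := by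
    have heq : {x : EuclideanSpace ℝ (Fin N) | (inner ℝ x c : ℝ) = 0}
        = (((ℝ ∙ c)ᗮ : Submodule ℝ (EuclideanSpace ℝ (Fin N))) : Set (EuclideanSpace ℝ (Fin N))) := by
      ext x
      simp [Submodule.mem_orthogonal_singleton_iff_inner_left]
    rw [heq]
    refine Measure.addHaar_submodule _ _ (fun h => hc ?_)
    have hcmem : c ∈ (ℝ ∙ c)ᗮ := h ▸ Submodule.mem_top
    exact inner_self_eq_zero.1 (Submodule.mem_orthogonal_singleton_iff_inner_left.1 hcmem)
  have hspan : volume (((ℝ ∙ c : Submodule ℝ (EuclideanSpace ℝ (Fin N))) : Set (EuclideanSpace ℝ (Fin N)))) = 0 := by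
    refine Measure.addHaar_submodule _ _ (fun h => ?_)
    have h1 : Module.finrank ℝ (ℝ ∙ c : Submodule ℝ (EuclideanSpace ℝ (Fin N))) = 1 :=
      finrank_span_singleton hc
    rw [h, finrank_top] at h1
    rw [finrank_euclideanSpace_fin] at h1
    omega
  -- ball =ᵐ A ∪ B
  have hunion : (ball (0 : EuclideanSpace ℝ (Fin N)) 1 : Set (EuclideanSpace ℝ (Fin N)))
      =ᵐ[volume] ((A ∪ B : Set (EuclideanSpace ℝ (Fin N)))) := by
    rw [MeasureTheory.ae_eq_set]
    constructor
    · refine measure_mono_null ?_ hhyp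
      rintro x ⟨hx1, hx2⟩
      show (inner ℝ x c : ℝ) = 0
      by_contra h
      rcases lt_or_gt_of_ne h with h | h
      · exact hx2 (Or.inr ⟨hx1, h⟩)
      · exact hx2 (Or.inl ⟨hx1, h⟩)
    · refine measure_mono_null ?_ measure_empty
      rintro x ⟨hx1, hx2⟩
      rcases hx1 with h | h
      · exact (hx2 h.1).elim
      · exact (hx2 h.1).elim
  have hABdisj : Disjoint A B := by
    refine Set.disjoint_left.2 fun {x} hx1 hx2 => ?_
    have h1 : (0:ℝ) < inner ℝ x c := hx1.2
    have h2 : (inner ℝ x c : ℝ) < 0 := hx2.2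
    linarith
  have hABimg : σ '' A = B := by
    ext y
    constructor
    · rintro ⟨x, ⟨hx1, hx2⟩, rfl⟩
      refine ⟨?_, ?_⟩
      · rw [mem_ball_zero_iff, σ.norm_map]; exact mem_ball_zero_iff.1 hx1
      · show (inner ℝ (σ x) c : ℝ) < 0
        rw [hinner]
        have : (0:ℝ) < inner ℝ x c := hx2
        linarith
    · rintro ⟨hy1, hy2⟩
      refine ⟨σ y, ⟨?_, ?_⟩, hinv y⟩
      · rw [mem_ball_zero_iff, σ.norm_map]; exact mem_ball_zero_iff.1 hy1
      · show (0:ℝ) < inner ℝ (σ y) c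
        rw [hinner]
        have : (inner ℝ y c : ℝ) < 0 := hy2
        linarith
  -- split the integral
  have step1 : ∫ x in ball (0 : EuclideanSpace ℝ (Fin N)) 1, f x
      = (∫ x in A, f x) + ∫ x in B, f x := by
    rw [setIntegral_congr_set hunion]
    exact setIntegral_union hABdisj
      (isOpen_ball.inter (isOpen_lt hcont continuous_const)).measurableSet hfA hfB
  have step2 : ∫ x in B, f x = ∫ x in A, f (σ x) := by
    rw [← hABimg]
    exact σ.measurePreserving.setIntegral_image_emb σ.toHomeomorph.measurableEmbedding f A
  have step3 : (∫ x in A, f x) + ∫ x in A, f (σ x) = ∫ x in A, (f x + f (σ x)) :=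
    (integral_add hfA hfσint).symm
  -- reduce to the set off the line
  set A' : Set (EuclideanSpace ℝ (Fin N)) :=
    A \ ((ℝ ∙ c : Submodule ℝ (EuclideanSpace ℝ (Fin N))) : Set (EuclideanSpace ℝ (Fin N))) with hA'
  have hAA' : A =ᵐ[volume] A' := by
    rw [MeasureTheory.ae_eq_set]
    constructor
    · refine measure_mono_null ?_ hspan
      rintro x ⟨hxA, hx2⟩
      by_contra h
      exact hx2 ⟨hxA, h⟩
    · exact measure_mono_null (fun x hx => (hx.2 hx.1.1).elim) measure_empty
  -- pointwise positivity on A'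
  have hgpos : ∀ x ∈ A', 0 < f x + f (σ x) := by
    rintro x ⟨⟨hx1, hx2⟩, hx3⟩
    have hx1' : ‖x‖ < 1 := mem_ball_zero_iff.1 hx1
    have hx2' : 0 < (inner ℝ x c : ℝ) := hx2
    have hbpos : (0:ℝ) < ‖c‖ := norm_pos_iff.2 hc
    have hcs1 : (inner ℝ x c : ℝ) < ‖x‖ * ‖c‖ := by
      rw [inner_lt_norm_mul_iff_real]
      intro h
      refine hx3 (Submodule.mem_span_singleton.2 ⟨‖c‖⁻¹ * ‖x‖, ?_⟩)
      rw [mul_smul, ← h, smul_smul, inv_mul_cancel₀ (ne_of_gt hbpos), one_smul]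
    have hcs2 : -(inner ℝ x c : ℝ) < ‖x‖ * ‖c‖ := by
      have h := @inner_lt_norm_mul_iff_real (EuclideanSpace ℝ (Fin N)) _ _ (-x) c
      rw [inner_neg_left, norm_neg] at h
      rw [h]
      intro heq
      rw [smul_neg] at heq
      refine hx3 (Submodule.mem_span_singleton.2 ⟨-(‖c‖⁻¹ * ‖x‖), ?_⟩)
      rw [neg_smul, mul_smul, ← heq, smul_neg, neg_neg, smul_smul,
        inv_mul_cancel₀ (ne_of_gt hbpos), one_smul]
    have hcs : (inner ℝ x c : ℝ) ^ 2 < ‖x‖ ^ 2 * ‖c‖ ^ 2 := by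
      have h := sq_lt_sq' (by linarith) hcs1
      calc (inner ℝ x c : ℝ) ^ 2 < (‖x‖ * ‖c‖) ^ 2 := h
        _ = ‖x‖ ^ 2 * ‖c‖ ^ 2 := by ring
    have hrr : ‖x + c‖ ^ 2 = ‖x‖ ^ 2 + ‖c‖ ^ 2 + 2 * (inner ℝ x c : ℝ) := by
      rw [norm_add_sq_real]; ring
    have hss : ‖σ x + c‖ ^ 2 = ‖x‖ ^ 2 + ‖c‖ ^ 2 - 2 * (inner ℝ x c : ℝ) := by
      rw [norm_add_sq_real, σ.norm_map, hinner]; ring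
    have hfx : f x = G ‖x + c‖ * (‖x + c‖⁻¹ * ((inner ℝ x c : ℝ) + ‖c‖ ^ 2)) := by
      simp only [hf]
      rw [real_inner_smul_left, inner_add_left, real_inner_self_eq_norm_sq]
    have hfσx : f (σ x) = G ‖σ x + c‖ * (‖σ x + c‖⁻¹ * (‖c‖ ^ 2 - (inner ℝ x c : ℝ))) := by
      simp only [hf]
      rw [real_inner_smul_left, inner_add_left, real_inner_self_eq_norm_sq, hinner]
      ring_nf
    rw [hfx, hfσx]
    exact key_arith G hG hGpos hx2' (by positivity) hcs hrr hss (norm_nonneg _) (norm_nonneg _)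
  -- conclude
  have hA'm : MeasurableSet A' :=
    hAopen.measurableSet.diff (Submodule.closed_of_finiteDimensional _).measurableSet
  have hgintA : IntegrableOn (fun x => f x + f (σ x)) A volume := hfA.add hfσint
  have hgint : IntegrableOn (fun x => f x + f (σ x)) A' volume :=
    hgintA.mono_set diff_subset
  rw [step1, step2, step3, setIntegral_congr_set hAA']
  rw [setIntegral_pos_iff_support_of_nonneg_ae
      ((ae_restrict_iff' hA'm).2 (ae_of_all _ fun x hx => (hgpos x hx).le)) hgint]
  have hsub : A' ⊆ Function.support (fun x => f x + f (σ x)) ∩ A' :=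
    fun x hx => ⟨ne_of_gt (hgpos x hx), hx⟩
  refine lt_of_lt_of_le ?_ (measure_mono hsub)
  rw [← measure_congr hAA']
  refine hAopen.measure_pos volume ⟨(2 * ‖c‖)⁻¹ • c, ?_, ?_⟩
  · have hbpos : (0:ℝ) < ‖c‖ := norm_pos_iff.2 hc
    rw [mem_ball_zero_iff, norm_smul, norm_inv, Real.norm_eq_abs,
      abs_of_pos (by linarith : (0:ℝ) < 2 * ‖c‖)]
    rw [show ((2 * ‖c‖)⁻¹ * ‖c‖ : ℝ) = 1 / 2 by field_simp]
    norm_num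
  · show (0:ℝ) < inner ℝ ((2 * ‖c‖)⁻¹ • c) c
    rw [real_inner_smul_left, real_inner_self_eq_norm_sq]
    have hbpos : (0:ℝ) < ‖c‖ := norm_pos_iff.2 hc
    positivity
end
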